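/- (Reciprocity for Dedekind sums.) For coprime positive integers a and b, s(a,b) + s(b,a) = -1/4 + (a² + b² + 1)/(12ab). -/

import Mathlib

open Finset Real

open Classical in
/-- The sawtooth function: 0 on integers, fractional part minus 1/2 otherwise. -/
noncomputable def saw (x : ℝ) : ℝ :=
  if ∃ n : ℤ, x = n then 0 else Int.fract x - 1/2

/-- The Dedekind sum s(q,p). -/
noncomputable def dedekindSum (q : ℤ) (p : ℕ) : ℝ :=
  ∑ μ ∈ Finset.range p, saw ((μ : ℝ) / p) * saw ((q : ℝ) * μ / p)

/-- The Dedekind–Rademacher sum s(q,p;x,y). -/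
noncomputable def drSum (q : ℤ) (p : ℕ) (x y : ℝ) : ℝ :=
  ∑ μ ∈ Finset.range p, saw (((μ : ℝ) + y) / p) * saw ((q : ℝ) * ((μ : ℝ) + y) / p + x)

section Aux

/-- For coprime `a b`, `μ ↦ a*μ % b` permutes `range b`. -/
lemma sum_mod_perm {M : Type*} [AddCommMonoid M] (a b : ℕ) (hb : 0 < b)
    (hcop : Nat.Coprime a b) (f : ℕ → M) :
    ∑ μ ∈ range b, f (a * μ % b) = ∑ μ ∈ range b, f μ := by
  obtain ⟨c, hc⟩ : ∃ c, a * c ≡ 1 [MOD b] := by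
    refine ⟨a ^ (b.totient - 1), ?_⟩
    have h1 : 1 ≤ b.totient := Nat.totient_pos.2 hb
    calc a * a ^ (b.totient - 1) = a ^ b.totient := by
          rw [← pow_succ']; congr 1; omega
      _ ≡ 1 [MOD b] := Nat.ModEq.pow_totient hcop
  refine Finset.sum_nbij' (fun μ => a * μ % b) (fun ν => c * ν % b) ?_ ?_ ?_ ?_ ?_
  · intro μ _; exact mem_range.2 (Nat.mod_lt _ hb)
  · intro ν _; exact mem_range.2 (Nat.mod_lt _ hb)
  · intro μ hμ
    have h : c * (a * μ % b) ≡ μ [MOD b] := by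
      calc c * (a * μ % b) ≡ c * (a * μ) [MOD b] := ((Nat.mod_modEq _ b)).mul_left c
        _ = (a * c) * μ := by ring
        _ ≡ 1 * μ [MOD b] := hc.mul_right μ
        _ = μ := one_mul μ
    rw [Nat.ModEq] at h
    simpa [Nat.mod_eq_of_lt (mem_range.1 hμ)] using h
  · intro ν hν
    have h : a * (c * ν % b) ≡ ν [MOD b] := by
      calc a * (c * ν % b) ≡ a * (c * ν) [MOD b] := ((Nat.mod_modEq _ b)).mul_left a
        _ = (a * c) * ν := by ring
        _ ≡ 1 * ν [MOD b] := hc.mul_right ν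
        _ = ν := one_mul ν
    rw [Nat.ModEq] at h
    simpa [Nat.mod_eq_of_lt (mem_range.1 hν)] using h
  · intro μ _; rfl

lemma six_mul_sum_sq (n : ℕ) :
    (6:ℤ) * ∑ μ ∈ range n, (μ:ℤ)^2 = n * (n - 1) * (2*n - 1) := by
  induction n with
  | zero => simp
  | succ n ih => rw [Finset.sum_range_succ, mul_add, ih]; push_cast; ring

lemma two_mul_sum_id (n : ℕ) :
    (2:ℤ) * ∑ μ ∈ range n, (μ:ℤ) = n * (n - 1) := by
  induction n with
  | zero => simp
  | succ n ih => rw [Finset.sum_range_succ, mul_add, ih]; push_cast; ring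

/-- Double counting of the weighted lattice points below the diagonal. -/
lemma key_count (a b : ℕ) (ha : 0 < a) (hb : 0 < b) (hcop : Nat.Coprime a b) :
    (∑ μ ∈ range b, ((a*μ/b : ℕ):ℤ)^2) + (∑ μ ∈ range b, ((a*μ/b : ℕ):ℤ))
      = a*(a-1)*(b-1) - 2 * ∑ ν ∈ range a, (ν:ℤ) * ((b*ν/a : ℕ):ℤ) := by
  classical
  set T : ℤ := ∑ p ∈ (range b ×ˢ range a).filter (fun p => b * p.2 < a * p.1), (p.2 : ℤ) with hT
  have hcol : 2 * T = (∑ μ ∈ range b, ((a*μ/b : ℕ):ℤ)^2) + (∑ μ ∈ range b, ((a*μ/b : ℕ):ℤ)) := by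
    have : T = ∑ μ ∈ range b, ∑ ν ∈ (range a).filter (fun ν => b * ν < a * μ), (ν:ℤ) := by
      rw [hT, Finset.sum_filter, Finset.sum_product]
      simp [Finset.sum_filter]
    rw [this, Finset.mul_sum, ← Finset.sum_add_distrib]
    refine Finset.sum_congr rfl ?_
    intro μ hμ
    rcases Nat.eq_zero_or_pos μ with h0 | hpos
    · subst h0; simp
    · have hk : a * μ / b < a := by
        rw [Nat.div_lt_iff_lt_mul hb]
        exact (Nat.mul_lt_mul_left ha).2 (mem_range.1 hμ)
      have hfe : (range a).filter (fun ν => b * ν < a * μ) = range (a * μ / b + 1) := by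
        ext ν
        simp only [mem_filter, mem_range, Nat.lt_succ_iff]
        constructor
        · rintro ⟨_, h⟩
          rw [Nat.le_div_iff_mul_le hb]
          have : b * ν = ν * b := Nat.mul_comm _ _
          omega
        · intro h
          have h2 : ν * b ≤ a * μ := (Nat.le_div_iff_mul_le hb).1 h
          have hcm : b * ν = ν * b := Nat.mul_comm _ _
          have hne : ν * b ≠ a * μ := by
            intro he
            have : b ∣ a * μ := ⟨ν, by omega⟩
            have : b ∣ μ := (hcop.symm).dvd_of_dvd_mul_left this
            have := Nat.le_of_dvd hpos this
            have := mem_range.1 hμ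
            omega
          exact ⟨lt_of_le_of_lt h hk, by omega⟩
      rw [hfe]
      have := two_mul_sum_id (a * μ / b + 1)
      push_cast at this ⊢
      linarith
  have hrow : 2 * T = a*(a-1)*(b-1) - 2 * ∑ ν ∈ range a, (ν:ℤ) * ((b*ν/a : ℕ):ℤ) := by
    have hsw : T = ∑ ν ∈ range a, ∑ μ ∈ range b, if b * ν < a * μ then (ν:ℤ) else 0 := by
      rw [hT, Finset.sum_filter, Finset.sum_product]
      rw [Finset.sum_comm]
    have : T = ∑ ν ∈ range a, (ν:ℤ) * ((b:ℤ) - 1 - ((b*ν/a : ℕ):ℤ)) := by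
      rw [hsw]
      refine Finset.sum_congr rfl ?_
      intro ν hν
      rcases Nat.eq_zero_or_pos ν with h0 | hpos
      · subst h0; simp
      · have hc : b * ν / a < b := by
          rw [Nat.div_lt_iff_lt_mul ha]
          exact (Nat.mul_lt_mul_left hb).2 (mem_range.1 hν)
        have hcompl : (range b).filter (fun μ => ¬ (b * ν < a * μ)) = range (b * ν / a + 1) := by
          ext μ
          simp only [mem_filter, mem_range, Nat.lt_succ_iff, not_lt]
          constructor
          · rintro ⟨_, h⟩
            rw [Nat.le_div_iff_mul_le ha]
            have : a * μ = μ * a := Nat.mul_comm _ _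
            omega
          · intro h
            have h2 : μ * a ≤ b * ν := (Nat.le_div_iff_mul_le ha).1 h
            have hcm : a * μ = μ * a := Nat.mul_comm _ _
            exact ⟨lt_of_le_of_lt h hc, by omega⟩
        have hcard : ((range b).filter (fun μ => b * ν < a * μ)).card = b - (b * ν / a + 1) := by
          have h1 := Finset.card_filter_add_card_filter_not
            (s := range b) (p := fun μ => b * ν < a * μ)
          rw [hcompl] at h1
          simp at h1
          omega
        rw [← Finset.sum_filter, Finset.sum_const, hcard, nsmul_eq_mul]
        have : (↑(b - (b * ν / a + 1)) : ℤ) = (b:ℤ) - 1 - (b*ν/a : ℕ) := by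
          have : b * ν / a + 1 ≤ b := hc
          push_cast [Nat.cast_sub this]
          ring
        rw [this]; ring
    rw [this]
    rw [Finset.mul_sum]
    have hg := two_mul_sum_id a
    have hexp : ∑ ν ∈ range a, 2 * ((ν:ℤ) * ((b:ℤ) - 1 - ((b*ν/a : ℕ):ℤ)))
        = ((b:ℤ) - 1) * (2 * ∑ ν ∈ range a, (ν:ℤ)) - 2 * ∑ ν ∈ range a, (ν:ℤ) * ((b*ν/a : ℕ):ℤ) := by
      rw [Finset.mul_sum, Finset.mul_sum, Finset.mul_sum, ← Finset.sum_sub_distrib]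
      refine Finset.sum_congr rfl fun ν _ => by ring
    rw [hexp, hg]
    ring
  rw [← hcol, hrow]

lemma hsplit (a b : ℕ) (μ : ℕ) :
    ((a*μ % b : ℕ):ℤ) = (a:ℤ)*(μ:ℤ) - (b:ℤ)*((a*μ/b : ℕ):ℤ) := by
  have h := Nat.div_add_mod (a*μ) b
  have h2 : ((a*μ:ℕ):ℤ) = (a:ℤ)*(μ:ℤ) := by push_cast; ring
  omega

/-- Reciprocity for the `D`-sums. -/
lemma key_D (a b : ℕ) (ha : 0 < a) (hb : 0 < b) (hcop : Nat.Coprime a b) :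
    12 * ((a:ℤ) * (∑ μ ∈ range b, (μ:ℤ) * ((a*μ/b : ℕ):ℤ))
        + (b:ℤ) * (∑ ν ∈ range a, (ν:ℤ) * ((b*ν/a : ℕ):ℤ)))
      = ((a:ℤ)-1)*((b:ℤ)-1)*(8*a*b - a - b - 1) := by
  set D : ℤ := ∑ μ ∈ range b, (μ:ℤ) * ((a*μ/b : ℕ):ℤ) with hD
  set Dp : ℤ := ∑ ν ∈ range a, (ν:ℤ) * ((b*ν/a : ℕ):ℤ) with hDp
  set K : ℤ := ∑ μ ∈ range b, ((a*μ/b : ℕ):ℤ)^2 with hK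
  set L : ℤ := ∑ μ ∈ range b, ((a*μ/b : ℕ):ℤ) with hL
  set S2 : ℤ := ∑ μ ∈ range b, (μ:ℤ)^2 with hS2
  set Sg : ℤ := ∑ μ ∈ range b, (μ:ℤ) with hSg
  have hA : (a:ℤ)^2*S2 - 2*a*b*D + b^2*K = S2 := by
    have hperm := sum_mod_perm a b hb hcop (fun n => (n:ℤ)^2)
    calc (a:ℤ)^2*S2 - 2*a*b*D + b^2*K
        = ∑ μ ∈ range b, ((a:ℤ)^2*(μ:ℤ)^2 - 2*a*b*((μ:ℤ)*((a*μ/b : ℕ):ℤ)) + b^2*((a*μ/b : ℕ):ℤ)^2) := by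
          rw [hD, hK, hS2, Finset.sum_add_distrib, Finset.sum_sub_distrib,
            ← Finset.mul_sum, ← Finset.mul_sum, ← Finset.mul_sum]
      _ = ∑ μ ∈ range b, ((a*μ % b : ℕ):ℤ)^2 := by
          refine Finset.sum_congr rfl fun μ _ => ?_
          rw [hsplit a b μ]; ring
      _ = S2 := hperm
  have hCL : (b:ℤ)*L = ((a:ℤ)-1)*Sg := by
    have hperm := sum_mod_perm a b hb hcop (fun n => (n:ℤ))
    have : ∑ μ ∈ range b, ((a*μ % b : ℕ):ℤ) = (a:ℤ)*Sg - (b:ℤ)*L := by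
      rw [hSg, hL, Finset.mul_sum, Finset.mul_sum, ← Finset.sum_sub_distrib]
      refine Finset.sum_congr rfl fun μ _ => ?_
      rw [hsplit a b μ]
    rw [this] at hperm
    linarith
  have hB : K + L = (a:ℤ)*((a:ℤ)-1)*((b:ℤ)-1) - 2*Dp := key_count a b ha hb hcop
  have h2 : 6*S2 = (b:ℤ)*((b:ℤ)-1)*(2*(b:ℤ)-1) := six_mul_sum_sq b
  have hG : 2*Sg = (b:ℤ)*((b:ℤ)-1) := two_mul_sum_id b
  have hbne : (b:ℤ) ≠ 0 := by exact_mod_cast hb.ne'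
  refine mul_left_cancel₀ hbne ?_
  linear_combination (-6:ℤ)*hA + (6*(b:ℤ)^2)*hB + (-6*(b:ℤ))*hCL + ((a:ℤ)^2-1)*h2 + (-3*(b:ℤ)*((a:ℤ)-1))*hG

/-- Reciprocity for the `M`-sums. -/
lemma key_M (a b : ℕ) (ha : 0 < a) (hb : 0 < b) (hcop : Nat.Coprime a b) :
    12 * ((a:ℤ)^2 * (↑(∑ μ ∈ range b, μ * (a*μ % b)) : ℤ)
        + (b:ℤ)^2 * (↑(∑ ν ∈ range a, ν * (b*ν % a)) : ℤ))
      = (a:ℤ)*(b:ℤ)*(3*(a:ℤ)*(b:ℤ)*((a:ℤ)+(b:ℤ)-3) + (a:ℤ)^2 + (b:ℤ)^2 + 1) := by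
  have hM : (↑(∑ μ ∈ range b, μ * (a*μ % b)) : ℤ)
      = (a:ℤ) * (∑ μ ∈ range b, (μ:ℤ)^2) - (b:ℤ) * (∑ μ ∈ range b, (μ:ℤ) * ((a*μ/b : ℕ):ℤ)) := by
    rw [Nat.cast_sum, Finset.mul_sum, Finset.mul_sum, ← Finset.sum_sub_distrib]
    refine Finset.sum_congr rfl fun μ _ => ?_
    rw [Nat.cast_mul, hsplit a b μ]; ring
  have hM' : (↑(∑ ν ∈ range a, ν * (b*ν % a)) : ℤ)
      = (b:ℤ) * (∑ ν ∈ range a, (ν:ℤ)^2) - (a:ℤ) * (∑ ν ∈ range a, (ν:ℤ) * ((b*ν/a : ℕ):ℤ)) := by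
    rw [Nat.cast_sum, Finset.mul_sum, Finset.mul_sum, ← Finset.sum_sub_distrib]
    refine Finset.sum_congr rfl fun ν _ => ?_
    rw [Nat.cast_mul, hsplit b a ν]; ring
  have h2 : 6*(∑ μ ∈ range b, (μ:ℤ)^2) = (b:ℤ)*((b:ℤ)-1)*(2*(b:ℤ)-1) := six_mul_sum_sq b
  have h2' : 6*(∑ ν ∈ range a, (ν:ℤ)^2) = (a:ℤ)*((a:ℤ)-1)*(2*(a:ℤ)-1) := six_mul_sum_sq a
  have hkey := key_D a b ha hb hcop
  rw [hM, hM']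
  linear_combination (2*(a:ℤ)^3)*h2 + (2*(b:ℤ)^3)*h2' + (-(a:ℤ)*(b:ℤ))*hkey

lemma saw_zero : saw 0 = 0 := by
  rw [saw, if_pos ⟨0, by norm_num⟩]

lemma saw_frac (m n : ℕ) (h1 : 0 < m) (h2 : m < n) : saw ((m:ℝ)/n) = (m:ℝ)/n - 1/2 := by
  have hn : (0:ℝ) < n := by exact_mod_cast h1.trans h2
  have hx0 : 0 < (m:ℝ)/n := div_pos (by exact_mod_cast h1) hn
  have hx1 : (m:ℝ)/n < 1 := (div_lt_one hn).2 (by exact_mod_cast h2)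
  rw [saw, if_neg, Int.fract_eq_self.2 ⟨hx0.le, hx1⟩]
  rintro ⟨k, hk⟩
  have h0 : (0:ℝ) < (k:ℝ) := hk ▸ hx0
  have h1' : (k:ℝ) < 1 := hk ▸ hx1
  have : (0:ℤ) < k := by exact_mod_cast h0
  have : (k:ℤ) < 1 := by exact_mod_cast h1'
  omega

lemma saw_shift (m n q : ℕ) (h1 : 0 < m) (h2 : m < n) :
    saw ((q:ℝ) + (m:ℝ)/n) = (m:ℝ)/n - 1/2 := by
  have hn : (0:ℝ) < n := by exact_mod_cast h1.trans h2
  have hx0 : 0 < (m:ℝ)/n := div_pos (by exact_mod_cast h1) hn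
  have hx1 : (m:ℝ)/n < 1 := (div_lt_one hn).2 (by exact_mod_cast h2)
  rw [saw, if_neg, Int.fract_natCast_add, Int.fract_eq_self.2 ⟨hx0.le, hx1⟩]
  rintro ⟨k, hk⟩
  have hk' : (m:ℝ)/n = (k:ℝ) - (q:ℝ) := by linarith
  have h0 : (0:ℝ) < ((k - (q:ℕ) : ℤ):ℝ) := by push_cast; rw [← hk']; exact hx0
  have h1' : (((k - (q:ℕ) : ℤ)):ℝ) < 1 := by push_cast; rw [← hk']; exact hx1
  have : (0:ℤ) < k - q := by exact_mod_cast h0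
  have : (k - (q:ℤ)) < 1 := by exact_mod_cast h1'
  omega

/-- Closed form for the Dedekind sum in terms of the integer sum `M`. -/
lemma dedekindSum_eq (a b : ℕ) (ha : 0 < a) (hb : 0 < b) (hcop : Nat.Coprime a b) :
    dedekindSum (a:ℤ) b
      = (↑(∑ μ ∈ range b, μ * (a*μ % b)) : ℝ) / (b:ℝ)^2 - ((b:ℝ)-1)/4 := by
  have hbr : (0:ℝ) < b := by exact_mod_cast hb
  rw [dedekindSum]
  have hterm : ∀ μ ∈ range b,
      saw ((μ:ℝ)/b) * saw (((a:ℤ):ℝ) * μ / b)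
        = if μ = 0 then 0 else ((μ:ℝ)/b - 1/2) * (((a*μ % b : ℕ):ℝ)/b - 1/2) := by
    intro μ hμ
    rcases Nat.eq_zero_or_pos μ with h0 | hpos
    · subst h0; simp [saw_zero]
    · rw [if_neg hpos.ne']
      have hμb := mem_range.1 hμ
      rw [saw_frac μ b hpos hμb]
      congr 1
      have hr : 0 < a*μ % b := by
        rcases Nat.eq_zero_or_pos (a*μ % b) with hz | h; swap; · exact h
        exfalso
        have hdvd : b ∣ a*μ := Nat.dvd_of_mod_eq_zero hz
        have : b ∣ μ := (hcop.symm).dvd_of_dvd_mul_left hdvd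
        have := Nat.le_of_dvd hpos this
        omega
      have hrb : a*μ % b < b := Nat.mod_lt _ hb
      have h := Nat.div_add_mod (a*μ) b
      have hR : (b:ℝ) * ((a*μ/b:ℕ):ℝ) + ((a*μ%b:ℕ):ℝ) = ((a*μ:ℕ):ℝ) := by
        exact_mod_cast congrArg (Nat.cast : ℕ → ℝ) h
      have hqq : ((a:ℤ):ℝ) * μ / b = ((a*μ/b : ℕ):ℝ) + ((a*μ % b : ℕ):ℝ)/b := by
        rw [div_eq_iff hbr.ne']
        calc ((a:ℤ):ℝ) * (μ:ℝ) = ((a*μ:ℕ):ℝ) := by push_cast; ring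
          _ = (((a*μ/b : ℕ):ℝ) + ((a*μ % b : ℕ):ℝ)/b) * b := by
              rw [← hR]; field_simp
      rw [hqq, saw_shift _ b _ hr hrb]
  rw [Finset.sum_congr rfl hterm]
  have hsplit0 : ∑ μ ∈ range b,
      (if μ = 0 then (0:ℝ) else ((μ:ℝ)/b - 1/2) * (((a*μ % b : ℕ):ℝ)/b - 1/2))
      = ∑ μ ∈ range b, (((μ:ℝ) * ((a*μ % b : ℕ):ℝ))/(b:ℝ)^2
          - (μ:ℝ)/(2*(b:ℝ)) - ((a*μ % b : ℕ):ℝ)/(2*(b:ℝ)) + (if μ = 0 then 0 else (1:ℝ)/4)) := by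
    refine Finset.sum_congr rfl fun μ _ => ?_
    rcases Nat.eq_zero_or_pos μ with h0 | hpos
    · subst h0; simp
    · rw [if_neg hpos.ne', if_neg hpos.ne']
      field_simp
      ring
  rw [hsplit0]
  have hS : ∑ μ ∈ range b, ((a*μ % b : ℕ):ℝ) = ∑ μ ∈ range b, (μ:ℝ) :=
    sum_mod_perm a b hb hcop (fun n => (n:ℝ))
  have hgauss : ∑ μ ∈ range b, (μ:ℝ) = ((b:ℝ) * ((b:ℝ)-1))/2 := by
    have h2 := Finset.sum_range_id_mul_two b
    have h3 := congrArg (Nat.cast : ℕ → ℝ) h2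
    push_cast [Nat.cast_sub hb] at h3
    linarith
  have hones : ∑ μ ∈ range b, (if μ = 0 then (0:ℝ) else 1/4) = ((b:ℝ)-1)/4 := by
    have he : ∀ μ ∈ range b, (if μ = 0 then (0:ℝ) else 1/4)
        = 1/4 - (if μ = 0 then ((1:ℝ)/4) else 0) := by
      intro μ _; split <;> norm_num
    rw [Finset.sum_congr rfl he, Finset.sum_sub_distrib, Finset.sum_const, Finset.card_range]
    rw [Finset.sum_ite_eq' (range b) 0 (fun _ => (1:ℝ)/4)]
    rw [if_pos (mem_range.2 hb), nsmul_eq_mul]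
    ring
  have hMc : (↑(∑ μ ∈ range b, μ * (a*μ % b)) : ℝ) = ∑ μ ∈ range b, (μ:ℝ) * ((a*μ % b : ℕ):ℝ) := by
    rw [Nat.cast_sum]
    exact Finset.sum_congr rfl fun μ _ => Nat.cast_mul _ _
  rw [Finset.sum_add_distrib, Finset.sum_sub_distrib, Finset.sum_sub_distrib,
    ← Finset.sum_div, ← Finset.sum_div, ← Finset.sum_div, hS, hgauss, hones, ← hMc]
  have hc : (((b:ℝ) * ((b:ℝ)-1))/2)/(2*(b:ℝ)) = ((b:ℝ)-1)/4 := by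
    field_simp; ring
  rw [hc]
  ring

end Aux

theorem dedekind_reciprocity (a b : ℕ) (ha : 0 < a) (hb : 0 < b)
    (hcop : Nat.Coprime a b) :
    dedekindSum (a : ℤ) b + dedekindSum (b : ℤ) a
      = -1/4 + ((a : ℝ)^2 + (b : ℝ)^2 + 1) / (12 * a * b) := by
  have har : (0:ℝ) < a := by exact_mod_cast ha
  have hbr : (0:ℝ) < b := by exact_mod_cast hb
  rw [dedekindSum_eq a b ha hb hcop, dedekindSum_eq b a hb ha hcop.symm]
  have hkey := key_M a b ha hb hcop
  set Sb : ℕ := ∑ μ ∈ range b, μ * (a*μ % b) with hSb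
  set Sa : ℕ := ∑ ν ∈ range a, ν * (b*ν % a) with hSa
  have hkeyR : (12:ℝ) * ((a:ℝ)^2 * (Sb:ℝ) + (b:ℝ)^2 * (Sa:ℝ))
      = (a:ℝ)*(b:ℝ)*(3*(a:ℝ)*(b:ℝ)*((a:ℝ)+(b:ℝ)-3) + (a:ℝ)^2 + (b:ℝ)^2 + 1) := by
    have h := congrArg (fun z : ℤ => (z : ℝ)) hkey
    push_cast at h
    exact h
  field_simp
  linear_combination 4 * hkeyR
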